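/- Let F be a field, and (u,v) a non-commuting pair in H(F) with Δ = u1·v2 − u2·v1. Define ⊗ on Z(H(F)) by: x ⊗ y = z iff there exist x', y' with [x',u] = [y',v] = 1, [x',v] = x, [u,y'] = y, and [x',y'] = z. Then ⊗ is a well-defined binary operation on Z(H(F)), and the map α ↦ h(0,0,α·Δ) is a field isomorphism from F onto (Z(H(F)), ·, ⊗), where · is matrix multiplication as addition. -/

import Mathlib

/-- The Heisenberg group over a field `F`: 3×3 upper unitriangular matrices,
represented by their entries `a` at (1,2), `b` at (2,3), `c` at (1,3),
with multiplication induced by matrix multiplication. -/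
@[ext] structure Heis (F : Type*) [Field F] where
  a : F
  b : F
  c : F

namespace Heis

variable {F : Type*} [Field F]

instance : Mul (Heis F) := ⟨fun x y => ⟨x.a + y.a, x.b + y.b, x.c + y.c + x.a * y.b⟩⟩
instance : One (Heis F) := ⟨⟨0, 0, 0⟩⟩
instance : Inv (Heis F) := ⟨fun x => ⟨-x.a, -x.b, x.a * x.b - x.c⟩⟩

@[simp] theorem mul_a (x y : Heis F) : (x * y).a = x.a + y.a := rfl
@[simp] theorem mul_b (x y : Heis F) : (x * y).b = x.b + y.b := rfl
@[simp] theorem mul_c (x y : Heis F) : (x * y).c = x.c + y.c + x.a * y.b := rfl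
@[simp] theorem one_a : (1 : Heis F).a = 0 := rfl
@[simp] theorem one_b : (1 : Heis F).b = 0 := rfl
@[simp] theorem one_c : (1 : Heis F).c = 0 := rfl
@[simp] theorem inv_a (x : Heis F) : (x⁻¹).a = -x.a := rfl
@[simp] theorem inv_b (x : Heis F) : (x⁻¹).b = -x.b := rfl
@[simp] theorem inv_c (x : Heis F) : (x⁻¹).c = x.a * x.b - x.c := rfl

instance : Group (Heis F) where
  mul_assoc x y z := by ext <;> simp <;> ring
  one_mul x := by ext <;> simp
  mul_one x := by ext <;> simp
  inv_mul_cancel x := by ext <;> simp <;> ring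

/-- `h a b c` is the unitriangular matrix with superdiagonal entries `a`, `b`
and corner entry `c`. -/
def h (a b c : F) : Heis F := ⟨a, b, c⟩

/-- `Δ u v = u₁v₂ - u₂v₁`. -/
def Δ (u v : Heis F) : F := u.a * v.b - u.b * v.a

end Heis


namespace Heis

variable {F : Type*} [Field F]

/-- Maltsev's multiplication relation on the center, with parameters `u`, `v`:
`MulR u v x y z` holds iff there exist `x'`, `y'` with `[x',u] = [y',v] = 1`,
`[x',v] = x`, `[u,y'] = y`, and `[x',y'] = z`. -/
def MulR (u v x y z : Heis F) : Prop :=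
  ∃ x' y' : Heis F,
    x'⁻¹ * u⁻¹ * x' * u = 1 ∧
    y'⁻¹ * v⁻¹ * y' * v = 1 ∧
    x'⁻¹ * v⁻¹ * x' * v = x ∧
    u⁻¹ * y'⁻¹ * u * y' = y ∧
    x'⁻¹ * y'⁻¹ * x' * y' = z

/-- `g u v : F → Z(H(F))`, the map `α ↦ h 0 0 (α·Δ u v)`. -/
def g (u v : Heis F) (α : F) : Heis F := h 0 0 (α * Δ u v)

/-- The canonical isomorphism `f_{(u,v),(u',v')} = g_{(u',v')} ∘ g_{(u,v)}⁻¹`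
between the Maltsev copies of `F` (for `x` in the center, `g_{(u,v)}⁻¹ x = x.c / Δ u v`). -/
def f (u v u' v' : Heis F) (x : Heis F) : Heis F := g u' v' (x.c / Δ u v)

end Heis

open Heis

section Aux
variable {F : Type*} [Field F]

theorem comm_eq (p q : Heis F) :
    p⁻¹ * q⁻¹ * p * q = h 0 0 (p.a * q.b - p.b * q.a) := by
  ext <;> simp [h] <;> ring

theorem mem_center_iff' (x : Heis F) :
    x ∈ Subgroup.center (Heis F) ↔ x.a = 0 ∧ x.b = 0 := by
  rw [Subgroup.mem_center_iff]
  constructor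
  · intro hx
    have h1 := congrArg Heis.c (hx ⟨0, 1, 0⟩)
    have h2 := congrArg Heis.c (hx ⟨1, 0, 0⟩)
    simp at h1 h2
    exact ⟨by linear_combination h1, by linear_combination h2⟩
  · rintro ⟨ha, hb⟩ y
    ext <;> simp [ha, hb] <;> ring

theorem delta_ne {u v : Heis F} (hu : u * v ≠ v * u) : Δ u v ≠ 0 := by
  intro h0
  rw [Δ] at h0
  apply hu
  ext
  · simp; ring
  · simp; ring
  · simp; linear_combination h0

theorem parallel {p q : Heis F} (hpq : p.a * q.b - p.b * q.a = 0)
    (hne : ¬(q.a = 0 ∧ q.b = 0)) : ∃ t : F, p.a = t * q.a ∧ p.b = t * q.b := by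
  by_cases hqa : q.a = 0
  · have hqb : q.b ≠ 0 := fun h => hne ⟨hqa, h⟩
    refine ⟨p.b / q.b, ?_, by field_simp⟩
    have : p.a * q.b = 0 := by linear_combination hpq + p.b * hqa
    field_simp
    rcases mul_eq_zero.mp this with h | h
    · simp [h, hqa]
    · exact absurd h hqb
  · refine ⟨p.a / q.a, by field_simp, ?_⟩
    field_simp
    linear_combination -hpq

end Aux

/-- `⊗` (given by `MulR`) is a well-defined binary operation on the center,
and `α ↦ h 0 0 (α·Δ)` is a field isomorphism from `F` onto the center with
matrix multiplication as addition and `⊗` as multiplication. -/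
theorem heis_maltsev_field_iso (F : Type*) [Field F] (u v : Heis F)
    (huv : u * v ≠ v * u) :
    (∀ x ∈ Subgroup.center (Heis F), ∀ y ∈ Subgroup.center (Heis F),
      ∃! z, z ∈ Subgroup.center (Heis F) ∧ MulR u v x y z) ∧
    (∀ α : F, g u v α ∈ Subgroup.center (Heis F)) ∧
    Function.Injective (g u v (F := F)) ∧
    (∀ x ∈ Subgroup.center (Heis F), ∃ α : F, g u v α = x) ∧
    (∀ α β : F, g u v (α + β) = g u v α * g u v β) ∧
    (∀ α β : F, MulR u v (g u v α) (g u v β) (g u v (α * β))) := by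
  have hΔ : Δ u v ≠ 0 := delta_ne huv
  have huab : ¬(u.a = 0 ∧ u.b = 0) := by
    rintro ⟨h1, h2⟩; apply hΔ; simp [Δ, h1, h2]
  have hvab : ¬(v.a = 0 ∧ v.b = 0) := by
    rintro ⟨h1, h2⟩; apply hΔ; simp [Δ, h1, h2]
  -- existence witness
  have hmul : ∀ α β : F, MulR u v (g u v α) (g u v β) (g u v (α * β)) := by
    intro α β
    refine ⟨⟨α * u.a, α * u.b, 0⟩, ⟨β * v.a, β * v.b, 0⟩, ?_, ?_, ?_, ?_, ?_⟩
    · rw [comm_eq]; ext <;> simp [h] <;> ring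
    · rw [comm_eq]; ext <;> simp [h] <;> ring
    · rw [comm_eq]; ext <;> simp [h, g, Δ] <;> ring
    · have : u⁻¹ * (⟨β * v.a, β * v.b, 0⟩ : Heis F)⁻¹ * u * ⟨β * v.a, β * v.b, 0⟩ =
          h 0 0 (u.a * (β * v.b) - u.b * (β * v.a)) := by
        ext <;> simp [h] <;> ring
      rw [this]; ext <;> simp [h, g, Δ] <;> ring
    · rw [comm_eq]; ext <;> simp [h, g, Δ] <;> ring
  have hcen : ∀ α : F, g u v α ∈ Subgroup.center (Heis F) := by
    intro α; rw [mem_center_iff']; exact ⟨rfl, rfl⟩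
  -- uniqueness
  have huniq : ∀ (α β : F) (z : Heis F), MulR u v (g u v α) (g u v β) z →
      z = g u v (α * β) := by
    rintro α β z ⟨x', y', h1, h2, h3, h4, h5⟩
    rw [comm_eq] at h1 h2 h3 h5
    have hy' : u⁻¹ * y'⁻¹ * u * y' = h 0 0 (u.a * y'.b - u.b * y'.a) := by
      ext <;> simp [h] <;> ring
    rw [hy'] at h4
    have e1 : x'.a * u.b - x'.b * u.a = 0 := by
      have := congrArg Heis.c h1; simpa [h] using this
    have e2 : x'.a * v.b - x'.b * v.a = α * (u.a * v.b - u.b * v.a) := by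
      have := congrArg Heis.c h3; simpa [g, h, Δ] using this
    have e4 : u.a * y'.b - u.b * y'.a = β * (u.a * v.b - u.b * v.a) := by
      have := congrArg Heis.c h4; simpa [g, h, Δ] using this
    have e2' : y'.a * v.b - y'.b * v.a = 0 := by
      have := congrArg Heis.c h2; simpa [h] using this
    obtain ⟨t, ht1, ht2⟩ := parallel e1 huab
    obtain ⟨s, hs1, hs2⟩ := parallel (p := y') (q := v) e2' hvab
    have htα : t = α := by
      have hΔ' : u.a * v.b - u.b * v.a ≠ 0 := by simpa [Δ] using hΔ
      have : t * (u.a * v.b - u.b * v.a) = α * (u.a * v.b - u.b * v.a) := by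
        linear_combination e2 - v.b * ht1 + v.a * ht2
      exact mul_right_cancel₀ hΔ' this
    have hsβ : s = β := by
      have hΔ' : u.a * v.b - u.b * v.a ≠ 0 := by simpa [Δ] using hΔ
      have : s * (u.a * v.b - u.b * v.a) = β * (u.a * v.b - u.b * v.a) := by
        linear_combination e4 - u.a * hs2 + u.b * hs1
      exact mul_right_cancel₀ hΔ' this
    rw [htα] at ht1 ht2
    rw [hsβ] at hs1 hs2
    rw [← h5]
    ext <;> simp [h, g, Δ]
    linear_combination y'.b * ht1 - y'.a * ht2 + α * u.a * hs2 - α * u.b * hs1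
  refine ⟨?_, hcen, ?_, ?_, ?_, hmul⟩
  · intro x hx y hy
    obtain ⟨hxa, hxb⟩ := (mem_center_iff' x).mp hx
    obtain ⟨hya, hyb⟩ := (mem_center_iff' y).mp hy
    have hxg : x = g u v (x.c / Δ u v) := by
      ext <;> simp [g, h, hxa, hxb]; field_simp
    have hyg : y = g u v (y.c / Δ u v) := by
      ext <;> simp [g, h, hya, hyb]; field_simp
    have hm : MulR u v x y (g u v (x.c / Δ u v * (y.c / Δ u v))) := by
      have := hmul (x.c / Δ u v) (y.c / Δ u v)
      rw [← hxg, ← hyg] at this; exact this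
    refine ⟨g u v (x.c / Δ u v * (y.c / Δ u v)), ⟨hcen _, hm⟩, ?_⟩
    rintro w ⟨-, hw⟩
    rw [hxg, hyg] at hw
    exact huniq _ _ _ hw
  · intro α β hαβ
    have := congrArg Heis.c hαβ
    simp [g, h] at this
    rcases this with h' | h'
    · exact h'
    · exact absurd h' hΔ
  · intro x hx
    obtain ⟨hxa, hxb⟩ := (mem_center_iff' x).mp hx
    exact ⟨x.c / Δ u v, by ext <;> simp [g, h, hxa, hxb]; field_simp⟩
  · intro α β
    ext <;> simp [g, h] <;> ring
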